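/- arXiv:2209.12768 — 3 statements merged into one kernel-verified Lean document; each statement's English description precedes it below -/
import Mathlib

section
/- Let d be a positive integer and let (a_r)_{r∈ℤ}, (b_r)_{r∈ℤ}, (C_r)_{r∈ℤ} be complex sequences satisfying a_r - a_{r+d} = b_r + C_r for all r, where there exist positive reals A and 0 < Q < 1 with |b_r| ≤ A·Q^{|r|} for all r, C_r = 0 for r ∉ [-d, -1], and a_r → 0 as r → ±∞. Then for every integer r, a_r = Σ_{l∈ℤ} sg(r,l)·b_{r+ld}, where sg(r,l) = (sg(r)+sg(l))/2 with sg(n) = 1 if n ≥ 0 and -1 otherwise; in particular the sum converges absolutely. -/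
noncomputable def sg (n : ℤ) : ℂ := if 0 ≤ n then 1 else -1

noncomputable def sg2 (r s : ℤ) : ℂ := (sg r + sg s) / 2

theorem stmt13 (d : ℕ) (hd : 1 ≤ d) (a b C : ℤ → ℂ) (A Q : ℝ)
    (hA : 0 < A) (hQ0 : 0 < Q) (hQ1 : Q < 1)
    (hrec : ∀ r : ℤ, a r - a (r + d) = b r + C r)
    (hb : ∀ r : ℤ, ‖b r‖ ≤ A * Q ^ r.natAbs)
    (hC : ∀ r : ℤ, ¬((-d : ℤ) ≤ r ∧ r ≤ -1) → C r = 0)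
    (htop : Filter.Tendsto a Filter.atTop (nhds 0))
    (hbot : Filter.Tendsto a Filter.atBot (nhds 0)) :
    ∀ r : ℤ, Summable (fun l : ℤ => sg2 r l * b (r + l * d)) ∧
      a r = ∑' l : ℤ, sg2 r l * b (r + l * d) := by
  intro r
  have hd0 : (d : ℤ) ≠ 0 := by positivity
  have hdpos : (0 : ℤ) < d := by positivity
  have hinj : Function.Injective (fun l : ℤ => r + l * d) := by
    intro x y h
    simp only at h
    exact mul_right_cancel₀ hd0 (add_left_cancel h)
  -- summability
  have hgeo : Summable (fun n : ℕ => A * Q ^ n) :=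
    (summable_geometric_of_lt_one hQ0.le hQ1).mul_left A
  have hg : Summable (fun n : ℤ => A * Q ^ n.natAbs) := by
    apply Summable.of_nat_of_neg
    · simpa using hgeo
    · simpa using hgeo
  have hsg : ∀ x y : ℤ, ‖sg2 x y‖ ≤ 1 := by
    intro x y
    unfold sg2 sg
    split_ifs <;> norm_num
  have hf : Summable (fun l : ℤ => sg2 r l * b (r + l * d)) := by
    apply Summable.of_norm_bounded (hg.comp_injective hinj)
    intro l
    calc ‖sg2 r l * b (r + l * d)‖
        = ‖sg2 r l‖ * ‖b (r + l * d)‖ := by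
          simp
      _ ≤ 1 * (A * Q ^ (r + l * d).natAbs) :=
          mul_le_mul (hsg r l) (hb _) (norm_nonneg _) zero_le_one
      _ = A * Q ^ (r + l * d).natAbs := one_mul _
  refine ⟨hf, ?_⟩
  set f : ℤ → ℂ := fun l => sg2 r l * b (r + l * d) with hfdef
  rcases le_or_gt 0 r with hr | hr
  · -- r ≥ 0
    have hzero : ∀ n : ℕ, f (-((n : ℤ) + 1)) = 0 := by
      intro n
      have : sg2 r (-((n : ℤ) + 1)) = 0 := by
        unfold sg2 sg
        rw [if_pos hr, if_neg (by omega)]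
        ring
      show sg2 r (-((n : ℤ) + 1)) * b (r + (-((n : ℤ) + 1)) * d) = 0
      rw [this, zero_mul]
    have hone : ∀ n : ℕ, f n = b (r + n * d) := by
      intro n
      have : sg2 r n = 1 := by
        unfold sg2 sg
        rw [if_pos hr, if_pos (by positivity)]
        norm_num
      show sg2 r n * b (r + n * d) = b (r + n * d)
      rw [this, one_mul]
    have hsumN : Summable (fun n : ℕ => f n) :=
      hf.comp_injective fun x y h => by exact_mod_cast h
    have key : ∀ N : ℕ, ∑ n ∈ Finset.range N, f n = a r - a (r + N * d) := by
      intro N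
      have step : ∀ n : ℕ, f n = a (r + n * d) - a (r + (n + 1 : ℕ) * d) := by
        intro n
        have hCz : C (r + n * d) = 0 := by
          apply hC
          have : (0 : ℤ) ≤ (n : ℤ) * d := by positivity
          omega
        have := hrec (r + n * d)
        rw [hCz, add_zero] at this
        rw [hone n, ← this]
        congr 1
        push_cast
        ring
      rw [Finset.sum_congr rfl fun n _ => step n,
        Finset.sum_range_sub' (fun n : ℕ => a (r + n * d))]
      simp
    have hmono : Filter.Tendsto (fun N : ℕ => r + (N : ℤ) * d) Filter.atTop Filter.atTop := by
      apply Filter.tendsto_atTop_mono (f := fun N : ℕ => r + (N : ℤ))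
      · intro N
        have : (N : ℤ) * 1 ≤ (N : ℤ) * d := by
          apply mul_le_mul_of_nonneg_left (by exact_mod_cast hd) (by positivity)
        omega
      · exact Filter.tendsto_atTop_add_const_left _ r tendsto_natCast_atTop_atTop
    have ht : Filter.Tendsto (fun N : ℕ => ∑ n ∈ Finset.range N, f n)
        Filter.atTop (nhds (a r)) := by
      have := (tendsto_const_nhds (x := a r)).sub (htop.comp hmono)
      rw [sub_zero] at this
      exact this.congr fun N => (key N).symm
    have hpos : HasSum (fun n : ℕ => f n) (a r) := by
      have hs := hsumN.hasSum
      have := hs.tendsto_sum_nat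
      rwa [tendsto_nhds_unique this ht] at hs
    have hneg : HasSum (fun n : ℕ => f (-((n : ℤ) + 1))) 0 := by
      have he : (fun n : ℕ => f (-((n : ℤ) + 1))) = fun _ => 0 := funext hzero
      rw [he]; exact hasSum_zero
    have := hpos.of_nat_of_neg_add_one hneg
    rw [add_zero] at this
    exact this.tsum_eq.symm
  · -- r < 0
    have hzero : ∀ n : ℕ, f n = 0 := by
      intro n
      have : sg2 r n = 0 := by
        unfold sg2 sg
        rw [if_neg (by omega), if_pos (by positivity)]
        ring
      show sg2 r n * b (r + n * d) = 0
      rw [this, zero_mul]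
    have hneg1 : ∀ n : ℕ, f (-((n : ℤ) + 1)) = -b (r + (-((n : ℤ) + 1)) * d) := by
      intro n
      have : sg2 r (-((n : ℤ) + 1)) = -1 := by
        unfold sg2 sg
        rw [if_neg (by omega), if_neg (by omega)]
        norm_num
      show sg2 r (-((n : ℤ) + 1)) * b (r + (-((n : ℤ) + 1)) * d) = -b (r + (-((n : ℤ) + 1)) * d)
      rw [this, neg_one_mul]
    have hsumN : Summable (fun n : ℕ => f (-((n : ℤ) + 1))) :=
      hf.comp_injective fun x y h => by
        simp only [neg_inj, add_left_inj, Nat.cast_inj] at h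
        omega
    have key : ∀ N : ℕ, ∑ n ∈ Finset.range N, f (-((n : ℤ) + 1)) = a r - a (r - N * d) := by
      intro N
      have step : ∀ n : ℕ, f (-((n : ℤ) + 1)) = a (r - n * d) - a (r - (n + 1 : ℕ) * d) := by
        intro n
        set x : ℤ := r + (-((n : ℤ) + 1)) * d with hx
        have hCz : C x = 0 := by
          apply hC
          have h1 : (-((n : ℤ) + 1)) * d = -((n : ℤ) * d + d) := by ring
          have h2 : (0 : ℤ) ≤ (n : ℤ) * d := by positivity
          omega
        have hrecx := hrec x
        rw [hCz, add_zero] at hrecx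
        rw [hneg1 n, ← hx, ← hrecx]
        have e1 : x + (d : ℤ) = r - n * d := by rw [hx]; push_cast; ring
        have e2 : x = r - (n + 1 : ℕ) * d := by rw [hx]; push_cast; ring
        rw [e1, e2]
        ring
      rw [Finset.sum_congr rfl fun n _ => step n,
        Finset.sum_range_sub' (fun n : ℕ => a (r - n * d))]
      simp
    have hmono : Filter.Tendsto (fun N : ℕ => r - (N : ℤ) * d) Filter.atTop Filter.atBot := by
      apply Filter.tendsto_atBot_mono (f := fun N : ℕ => r - (N : ℤ))
      · intro N
        have : (N : ℤ) * 1 ≤ (N : ℤ) * d := by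
          apply mul_le_mul_of_nonneg_left (by exact_mod_cast hd) (by positivity)
        omega
      · apply Filter.tendsto_atBot_add_const_left
        exact Filter.tendsto_neg_atBot_iff.mpr tendsto_natCast_atTop_atTop
    have ht : Filter.Tendsto (fun N : ℕ => ∑ n ∈ Finset.range N, f (-((n : ℤ) + 1)))
        Filter.atTop (nhds (a r)) := by
      have := (tendsto_const_nhds (x := a r)).sub (hbot.comp hmono)
      rw [sub_zero] at this
      exact this.congr fun N => (key N).symm
    have hnegS : HasSum (fun n : ℕ => f (-((n : ℤ) + 1))) (a r) := by
      have hs := hsumN.hasSum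
      have := hs.tendsto_sum_nat
      rwa [tendsto_nhds_unique this ht] at hs
    have hposS : HasSum (fun n : ℕ => f n) 0 := by
      have he : (fun n : ℕ => f (n : ℤ)) = fun _ => 0 := funext hzero
      rw [he]; exact hasSum_zero
    have := hposS.of_nat_of_neg_add_one hnegS
    rw [zero_add] at this
    exact this.tsum_eq.symm
end

section
/- Let q ∈ ℂ with 0 < |q| < 1 and let f : ℂ∖{0} → ℂ be given by an absolutely convergent Laurent series f(x) = Σ_{r∈ℤ} a_r x^r satisfying f(qx) = -x^{-2t} f(x) for a positive integer t and all x ≠ 0. Then the coefficients satisfy a_{2tn+s} = (-1)^n q^{2t·n(n-1)/2 + ns} a_s for all integers n and 0 ≤ s < 2t, and hence f(x) = Σ_{s=0}^{2t-1} a_s x^s Σ_{n∈ℤ} q^{2t·binom(n,2)} (-q^s x^{2t})^n. -/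
open MeasureTheory Real ENNReal

lemma exp_int_circle_integral (k : ℤ) (hk : k ≠ 0) :
    ∫ θ in (0:ℝ)..(2*π), Complex.exp (k * θ * Complex.I) = 0 := by
  have hrw : ∀ θ : ℝ, (k : ℂ) * θ * Complex.I = ((k : ℂ) * Complex.I) * θ := by
    intro θ; ring
  simp only [hrw]
  have hc : (k : ℂ) * Complex.I ≠ 0 := by
    simp [Complex.I_ne_zero, Int.cast_ne_zero, hk]
  rw [integral_exp_mul_complex hc]
  have h1 : (k : ℂ) * Complex.I * ((2*π : ℝ) : ℂ) = (k : ℂ) * (2 * π * Complex.I) := by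
    push_cast; ring
  rw [h1, Complex.exp_int_mul_two_pi_mul_I]
  simp

lemma vanish (b : ℤ → ℂ) (hb : Summable fun r => ‖b r‖)
    (h0 : ∀ θ : ℝ, ∑' r : ℤ, b r * Complex.exp (r * θ * Complex.I) = 0) :
    ∀ n : ℤ, b n = 0 := by
  intro n
  have hpi : (0:ℝ) ≤ 2*π := by positivity
  set μ := volume.restrict (Set.Ioc (0:ℝ) (2*π)) with hμ
  set g : ℤ → ℝ → ℂ := fun r θ => b r * Complex.exp (((r:ℂ) - n) * θ * Complex.I) with hg
  have hmeas : ∀ r : ℤ, AEStronglyMeasurable (g r) μ := by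
    intro r
    exact (Continuous.aestronglyMeasurable (by fun_prop))
  have hnorm : ∀ r (θ : ℝ), ‖g r θ‖ = ‖b r‖ := by
    intro r θ
    have : ((r:ℂ) - n) * θ * Complex.I = (((r - n : ℤ) * θ : ℝ) : ℂ) * Complex.I := by
      push_cast; ring
    simp only [hg, norm_mul, this]
    rw [Complex.norm_exp_ofReal_mul_I, mul_one]
  have hlin : ∑' r : ℤ, ∫⁻ θ, ‖g r θ‖₊ ∂μ ≠ ⊤ := by
    have h1 : ∀ r : ℤ, ∫⁻ θ, ‖g r θ‖₊ ∂μ = ‖b r‖₊ * ENNReal.ofReal (2*π) := by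
      intro r
      have hnn : ∀ θ : ℝ, (‖g r θ‖₊ : ℝ≥0∞) = (‖b r‖₊ : ℝ≥0∞) := by
        intro θ
        have h2 : ‖g r θ‖₊ = ‖b r‖₊ := NNReal.coe_injective (by simpa using hnorm r θ)
        rw [h2]
      simp only [hnn]
      rw [MeasureTheory.lintegral_const, hμ, Measure.restrict_apply MeasurableSet.univ,
        Set.univ_inter, Real.volume_Ioc]
      norm_num
    simp only [h1]
    rw [ENNReal.tsum_mul_right]
    apply ENNReal.mul_ne_top _ ENNReal.ofReal_ne_top
    rw [ENNReal.tsum_coe_ne_top_iff_summable]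
    rw [← NNReal.summable_coe]
    simpa [coe_nnnorm] using hb
  have hswap := MeasureTheory.integral_tsum hmeas hlin
  -- LHS is 0
  have hL : ∫ θ, ∑' r : ℤ, g r θ ∂μ = 0 := by
    have : ∀ θ : ℝ, ∑' r : ℤ, g r θ = 0 := by
      intro θ
      have hterm : ∀ r : ℤ, g r θ =
          (b r * Complex.exp ((r:ℂ) * θ * Complex.I)) * Complex.exp (-(n:ℂ) * θ * Complex.I) := by
        intro r
        simp only [hg]
        rw [show ((r:ℂ) - n) * θ * Complex.I =
            (r:ℂ) * θ * Complex.I + (-(n:ℂ)) * θ * Complex.I by ring, Complex.exp_add]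
        ring
      simp only [hterm]
      rw [tsum_mul_right, h0 θ, zero_mul]
    simp only [this, integral_zero]
  -- RHS is b n * 2π
  have hint : ∀ r : ℤ, ∫ θ, g r θ ∂μ =
      if r = n then (2*π : ℝ) • b n else 0 := by
    intro r
    have hconv : ∫ θ, g r θ ∂μ = ∫ θ in (0:ℝ)..(2*π), g r θ := by
      rw [intervalIntegral.integral_of_le hpi]
    rw [hconv]
    by_cases h : r = n
    · subst h
      simp only [hg, sub_self, zero_mul, Complex.exp_zero, mul_one]
      rw [intervalIntegral.integral_const]
      simp
    · simp only [h, if_false, hg]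
      rw [intervalIntegral.integral_const_mul]
      have : ∀ θ : ℝ, ((r:ℂ) - n) * θ * Complex.I = ((r - n : ℤ) : ℂ) * θ * Complex.I := by
        intro θ; push_cast; ring
      simp only [this]
      rw [exp_int_circle_integral (r - n) (sub_ne_zero.mpr h), mul_zero]
  rw [hL] at hswap
  rw [tsum_congr hint] at hswap
  rw [tsum_eq_single n (by intro r hr; simp [hr])] at hswap
  rw [if_pos rfl] at hswap
  have h2π : (2*π : ℝ) ≠ 0 := by positivity
  have h3 := hswap.symm
  rw [smul_eq_zero] at h3
  tauto

lemma rec_lemma (q : ℂ) (hq : q ≠ 0) (t : ℕ) (a : ℤ → ℂ)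
    (hsum : ∀ x : ℂ, x ≠ 0 → Summable (fun r : ℤ => a r * x ^ r))
    (hfe : ∀ x : ℂ, x ≠ 0 →
      (∑' r : ℤ, a r * (q * x) ^ r) = -x ^ (-(2 * t : ℤ)) * ∑' r : ℤ, a r * x ^ r) :
    ∀ r : ℤ, a (r + 2 * t) = -(q ^ r) * a r := by
  set m : ℤ := 2 * t with hm
  set b : ℤ → ℂ := fun r => a r * q ^ r + a (r + m) with hb
  -- summability facts
  have hsa : Summable a := by
    have := hsum 1 one_ne_zero
    simpa using this
  have hsaq : Summable (fun r : ℤ => a r * q ^ r) := by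
    have := hsum q hq
    simpa using this
  have hsam : Summable (fun r : ℤ => a (r + m)) :=
    hsa.comp_injective (add_left_injective m)
  have hsb : Summable b := hsaq.add hsam
  have hnb : Summable fun r => ‖b r‖ := summable_norm_iff.mpr hsb
  -- key: for x ≠ 0, Σ b r x^r = 0
  have key : ∀ x : ℂ, x ≠ 0 → ∑' r : ℤ, b r * x ^ r = 0 := by
    intro x hx
    have hqx : q * x ≠ 0 := mul_ne_zero hq hx
    have s1 : Summable (fun r : ℤ => a r * q ^ r * x ^ r) := by
      have := hsum (q * x) hqx
      simpa [mul_zpow, mul_assoc] using this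
    have s2 : Summable (fun r : ℤ => a (r + m) * x ^ r) := by
      have h3 : Summable (fun r : ℤ => a r * x ^ (r - m)) := by
        have : (fun r : ℤ => a r * x ^ (r - m)) = fun r : ℤ => x ^ (-m) * (a r * x ^ r) := by
          funext r
          rw [zpow_sub₀ hx, zpow_neg]
          field_simp
        rw [this]
        exact (hsum x hx).mul_left _
      have h4 := h3.comp_injective (add_left_injective m)
      have h5 : ((fun r : ℤ => a r * x ^ (r - m)) ∘ fun r : ℤ => r + m)
          = fun r : ℤ => a (r + m) * x ^ r := by
        funext r
        simp [Function.comp, add_sub_cancel_right]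
      rwa [h5] at h4
    have hsplit : ∑' r : ℤ, b r * x ^ r
        = (∑' r : ℤ, a r * q ^ r * x ^ r) + ∑' r : ℤ, a (r + m) * x ^ r := by
      rw [← Summable.tsum_add s1 s2]
      apply tsum_congr
      intro r
      simp only [hb]
      ring
    have h1 : ∑' r : ℤ, a r * q ^ r * x ^ r = ∑' r : ℤ, a r * (q * x) ^ r := by
      apply tsum_congr; intro r; rw [mul_zpow, mul_assoc]
    have h2 : ∑' r : ℤ, a (r + m) * x ^ r = ∑' r : ℤ, a r * x ^ (r - m) := by
      have := (Equiv.addRight m).tsum_eq (fun r : ℤ => a r * x ^ (r - m))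
      simp only [Equiv.coe_addRight] at this
      rw [← this]
      apply tsum_congr; intro r
      rw [add_sub_cancel_right]
    have h3 : ∑' r : ℤ, a r * x ^ (r - m) = x ^ (-m) * ∑' r : ℤ, a r * x ^ r := by
      rw [← tsum_mul_left]
      apply tsum_congr; intro r
      rw [zpow_sub₀ hx, zpow_neg]
      field_simp
    rw [hsplit, h1, hfe x hx, h2, h3, hm]
    ring
  -- apply vanish
  have hbz : ∀ r : ℤ, b r = 0 := by
    apply vanish b hnb
    intro θ
    have hx : Complex.exp (θ * Complex.I) ≠ 0 := Complex.exp_ne_zero _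
    have := key _ hx
    rw [← this]
    apply tsum_congr; intro r
    congr 1
    rw [← Complex.exp_int_mul]
    ring_nf
  intro r
  have := hbz r
  simp only [hb] at this
  have : a (r + m) = -(a r * q ^ r) := by linear_combination this
  rw [this]; ring


lemma hev (n : ℤ) : 2 * (n * (n - 1) / 2) = n * (n - 1) := by
  have h2 : Even (n * (n - 1)) := Int.even_mul_pred_self n
  obtain ⟨c, hc⟩ := h2
  generalize hp : n * (n - 1) = p at hc ⊢
  omega

lemma hEstep (t : ℕ) (s : ℕ) (n : ℤ) :
    (2 * (t:ℤ) * ((n+1) * ((n+1) - 1) / 2) + (n+1) * s)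
      = (2 * (t:ℤ) * (n * (n - 1) / 2) + n * s) + (2 * t * n + s) := by
  have e1 := hev n
  have e2 := hev (n + 1)
  have hv : (n+1) * ((n+1) - 1) / 2 = n * (n - 1) / 2 + n := by
    have e3 : (n+1) * ((n+1) - 1) = n * (n - 1) + 2 * n := by ring
    linarith
  rw [hv]
  ring

lemma part1 (q : ℂ) (hq : q ≠ 0) (t : ℕ) (a : ℤ → ℂ)
    (rec : ∀ r : ℤ, a (r + 2 * t) = -(q ^ r) * a r) :
    ∀ n : ℤ, ∀ s : ℕ,
      a (2 * t * n + s) = (-1 : ℂ) ^ n * q ^ (2 * t * (n * (n - 1) / 2) + n * s) * a s := by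
  have hm1 : (-1 : ℂ) ≠ 0 := by norm_num
  have main : ∀ (A r : ℤ) (c d : ℂ), -(q ^ r) * (c * q ^ A * d) = (-1 * c) * q ^ (A + r) * d := by
    intro A r c d
    rw [zpow_add₀ hq]
    ring
  have mneg : ∀ n : ℤ, (-1 : ℂ) ^ (n + 1) = -1 * (-1 : ℂ) ^ n := by
    intro n
    rw [zpow_add_one₀ hm1]
    ring
  intro n s
  induction n using Int.induction_on with
  | zero => simp
  | succ n ih =>
    have h1 : (2 * (t:ℤ) * (n + 1) + s) = (2 * t * n + s) + 2 * t := by ring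
    rw [h1, rec, ih, main, ← hEstep, mneg]
  | pred n ih =>
    have h1 : (2 * (t:ℤ) * (-n) + s) = (2 * t * (-n - 1) + s) + 2 * t := by ring
    rw [h1, rec] at ih
    have hqr : q ^ (2 * (t:ℤ) * (-n - 1) + s) ≠ 0 := zpow_ne_zero _ hq
    have h2 : a (2 * (t:ℤ) * (-n - 1) + s)
        = (-(q ^ (2 * (t:ℤ) * (-n - 1) + s)))⁻¹
            * ((-1 : ℂ) ^ (-n:ℤ) * q ^ (2 * (t:ℤ) * ((-n) * ((-n) - 1) / 2) + (-n) * s) * a s) := by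
      rw [← ih]
      field_simp
    rw [h2]
    have hE := hEstep t s (-n - 1)
    have h3 : (-n : ℤ) - 1 + 1 = -n := by ring
    rw [h3] at hE
    have h4 : (2 * (t:ℤ) * ((-n-1) * ((-n-1) - 1) / 2) + (-n-1) * s)
        = (2 * (t:ℤ) * ((-n) * ((-n) - 1) / 2) + (-n) * s) - (2 * t * (-n-1) + s) := by
      omega
    rw [h4, zpow_sub₀ hq]
    have h5 : ((-1:ℂ) ^ (-(n:ℤ) - 1)) = (-1:ℂ) ^ (-(n:ℤ)) / (-1:ℂ) ^ (1:ℤ) := zpow_sub₀ hm1 _ _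
    rw [h5]
    field_simp


def resEquiv (m : ℕ) (hm : 0 < m) : Fin m × ℤ ≃ ℤ where
  toFun p := (m : ℤ) * p.2 + (p.1 : ℤ)
  invFun r := (⟨(r % m).toNat, by
      have h1 : (0:ℤ) < m := by exact_mod_cast hm
      have h2 := Int.emod_nonneg r h1.ne'
      have h3 := Int.emod_lt_of_pos r h1
      omega⟩, r / m)
  left_inv := by
    rintro ⟨s, n⟩
    have h1 : (0:ℤ) < m := by exact_mod_cast hm
    have hs0 : (0:ℤ) ≤ (s : ℤ) := Int.ofNat_nonneg s
    have hsm : ((s:ℤ)) < m := by exact_mod_cast s.isLt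
    have hmod : ((m:ℤ) * n + s) % m = s := by
      rw [add_comm, Int.add_mul_emod_self_left]
      exact Int.emod_eq_of_lt hs0 hsm
    have hdiv : ((m:ℤ) * n + s) / m = n := by
      rw [add_comm, Int.add_mul_ediv_left _ _ h1.ne', Int.ediv_eq_zero_of_lt hs0 hsm]
      ring
    ext
    · simp [hmod]
    · simp [hdiv]
  right_inv := by
    intro r
    have h1 : (0:ℤ) < m := by exact_mod_cast hm
    have h2 := Int.emod_nonneg r h1.ne'
    simp only
    rw [Int.toNat_of_nonneg h2]
    exact Int.mul_ediv_add_emod r m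

lemma termid (q x : ℂ) (hq : q ≠ 0) (hx : x ≠ 0) (t s : ℕ) (n : ℤ) (c : ℂ) :
    ((-1:ℂ)) ^ n * q ^ (2 * (t:ℤ) * (n * (n-1) / 2) + n * (s:ℤ)) * c * x ^ (2 * (t:ℤ) * n + (s:ℤ))
      = c * x ^ (s:ℤ) * (q ^ (2 * (t:ℤ) * (n * (n-1) / 2)) * (-q ^ (s:ℤ) * x ^ (2 * (t:ℤ))) ^ n) := by
  have h1 : (-q ^ (s:ℤ) * x ^ (2 * (t:ℤ))) ^ n
      = (-1:ℂ) ^ n * q ^ ((s:ℤ) * n) * x ^ (2 * (t:ℤ) * n) := by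
    rw [show (-q ^ (s:ℤ) * x ^ (2 * (t:ℤ))) = (-1) * q ^ (s:ℤ) * x ^ (2 * (t:ℤ)) by ring,
      mul_zpow, mul_zpow, ← zpow_mul, ← zpow_mul]
  rw [h1, zpow_add₀ hq, zpow_add₀ hx, show ((s:ℤ)) * n = n * (s:ℤ) by ring]
  ring

lemma part2 (q : ℂ) (hq : q ≠ 0) (t : ℕ) (ht : 1 ≤ t) (a : ℤ → ℂ)
    (hsum : ∀ x : ℂ, x ≠ 0 → Summable (fun r : ℤ => a r * x ^ r))
    (h1 : ∀ n : ℤ, ∀ s : ℕ,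
      a (2 * t * n + s) = (-1 : ℂ) ^ n * q ^ (2 * t * (n * (n - 1) / 2) + n * s) * a s) :
    ∀ x : ℂ, x ≠ 0 →
      (∑' r : ℤ, a r * x ^ r)
        = ∑ s ∈ Finset.range (2 * t), a s * x ^ (s : ℤ)
            * ∑' n : ℤ, q ^ (2 * t * (n * (n - 1) / 2)) * (-q ^ (s : ℤ) * x ^ (2 * t : ℤ)) ^ n := by
  intro x hx
  have hm : 0 < 2 * t := by omega
  set f : ℤ → ℂ := fun r => a r * x ^ r with hf
  set e := resEquiv (2 * t) hm with he
  have hsf : Summable f := hsum x hx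
  have hse : Summable (f ∘ e) := hsf.comp_injective e.injective
  have hfib : ∀ s : Fin (2 * t), Summable (fun n : ℤ => (f ∘ e) (s, n)) := by
    intro s
    have hinj : Function.Injective (fun n : ℤ => (s, n) : ℤ → Fin (2*t) × ℤ) := by
      intro u v huv
      simpa using huv
    exact hse.comp_injective hinj
  have step1 : ∑' r : ℤ, f r = ∑' (s : Fin (2 * t)) (n : ℤ), f (e (s, n)) := by
    rw [← e.tsum_eq f]
    exact Summable.tsum_prod' hse hfib
  rw [step1, tsum_fintype]
  rw [← Fin.sum_univ_eq_sum_range (fun s => a s * x ^ (s : ℤ)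
      * ∑' n : ℤ, q ^ (2 * t * (n * (n - 1) / 2)) * (-q ^ (s : ℤ) * x ^ (2 * t : ℤ)) ^ n) (2 * t)]
  apply Finset.sum_congr rfl
  intro s _
  have hes : ∀ n : ℤ, (e (s, n) : ℤ) = 2 * (t:ℤ) * n + (s:ℤ) := by
    intro n
    simp only [he, resEquiv, Equiv.coe_fn_mk]
    push_cast
    ring
  calc ∑' n : ℤ, f (e (s, n))
      = ∑' n : ℤ, (a (s:ℕ) * x ^ ((s:ℕ):ℤ))
          * (q ^ (2 * (t:ℤ) * (n * (n-1) / 2)) * (-q ^ ((s:ℕ):ℤ) * x ^ (2 * (t:ℤ))) ^ n) := by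
        apply tsum_congr
        intro n
        rw [hf]
        simp only [hes n]
        rw [h1 n s, termid q x hq hx t s n (a s)]
    _ = (a (s:ℕ) * x ^ ((s:ℕ):ℤ))
          * ∑' n : ℤ, q ^ (2 * (t:ℤ) * (n * (n-1) / 2)) * (-q ^ ((s:ℕ):ℤ) * x ^ (2 * (t:ℤ))) ^ n := by
        rw [tsum_mul_left]

theorem stmt17 (q : ℂ) (hq0 : 0 < ‖q‖) (hq1 : ‖q‖ < 1)
    (t : ℕ) (ht : 1 ≤ t) (a : ℤ → ℂ)
    (hsum : ∀ x : ℂ, x ≠ 0 → Summable (fun r : ℤ => a r * x ^ r))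
    (hfe : ∀ x : ℂ, x ≠ 0 →
      (∑' r : ℤ, a r * (q * x) ^ r) = -x ^ (-(2 * t : ℤ)) * ∑' r : ℤ, a r * x ^ r) :
    (∀ n : ℤ, ∀ s : ℕ, s < 2 * t →
      a (2 * t * n + s) = (-1 : ℂ) ^ n * q ^ (2 * t * (n * (n - 1) / 2) + n * s) * a s) ∧
    (∀ x : ℂ, x ≠ 0 →
      (∑' r : ℤ, a r * x ^ r)
        = ∑ s ∈ Finset.range (2 * t), a s * x ^ (s : ℤ)
            * ∑' n : ℤ, q ^ (2 * t * (n * (n - 1) / 2)) * (-q ^ (s : ℤ) * x ^ (2 * t : ℤ)) ^ n) := by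
  have hq : q ≠ 0 := by
    intro h
    rw [h] at hq0
    simp at hq0
  have hrec := rec_lemma q hq t a hsum hfe
  have h1 := part1 q hq t a hrec
  exact ⟨fun n s _ => h1 n s, part2 q hq t ht a hsum h1⟩
end

section
/- Let q ∈ ℂ with 0 < |q| < 1 and suppose the special polynomial family satisfies f(qx) = -x·f(x) + x^{1-m} + x^m for a fixed positive integer m, where f : ℂ∖{0} → ℂ is given by an everywhere absolutely convergent Laurent series with no poles. Then f(x) = (-1)^{m+1} q^{binom(m,2)} Σ_{r=1-m}^{m-1} (-1)^r q^{-binom(r,2) - r} x^r, where binom(n,2) = n(n-1)/2. -/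
open MeasureTheory AddCircle

lemma integral_fourier' (T : ℝ) [hT : Fact (0 < T)] (k : ℤ) :
    ∫ t : AddCircle T, fourier k t ∂haarAddCircle = if k = 0 then 1 else 0 := by
  split_ifs with h
  · subst h
    simp_rw [fourier_zero]
    simp
  · exact integral_eq_zero_of_add_right_eq_neg (μ := haarAddCircle)
      (fourier_add_half_inv_index h hT.elim)

lemma fourier_cont' {T : ℝ} (k : ℤ) : Continuous fun t : AddCircle T => (fourier k t : ℂ) :=
  (fourier k).continuous

lemma fourier_integrable' (T : ℝ) [hT : Fact (0 < T)] (k j : ℤ) (cc : ℂ) :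
    Integrable (fun t : AddCircle T => fourier k t * (cc * fourier j t)) haarAddCircle := by
  apply Continuous.integrable_of_hasCompactSupport
  · exact (fourier_cont' k).mul (continuous_const.mul (fourier_cont' j))
  · exact HasCompactSupport.of_compactSpace _

open Real in
lemma laurent_coeff_zero (b : ℤ → ℂ)
    (hs : ∀ x : ℂ, x ≠ 0 → HasSum (fun r : ℤ => b r * x ^ r) 0) (n : ℤ) : b n = 0 := by
  haveI : Fact (0 < 2 * π) := ⟨by positivity⟩
  have h2 : Summable (fun r : ℤ => ‖b r * (2 : ℂ) ^ r‖) :=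
    summable_norm_iff.2 (hs 2 two_ne_zero).summable
  have hh : Summable (fun r : ℤ => ‖b r * (2 : ℂ)⁻¹ ^ r‖) :=
    summable_norm_iff.2 (hs 2⁻¹ (by norm_num)).summable
  have hbnd : ∀ r : ℤ, ‖b r‖ ≤ ‖b r * (2 : ℂ) ^ r‖ + ‖b r * (2 : ℂ)⁻¹ ^ r‖ := by
    intro r
    have e2 : ‖b r * (2 : ℂ) ^ r‖ = ‖b r‖ * (2 : ℝ) ^ r := by
      rw [norm_mul, norm_zpow]; norm_num
    have eh : ‖b r * (2 : ℂ)⁻¹ ^ r‖ = ‖b r‖ * (2 : ℝ)⁻¹ ^ r := by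
      rw [norm_mul, norm_zpow, norm_inv]; norm_num
    rcases le_or_gt 0 r with hr | hr
    · have : (1 : ℝ) ≤ (2 : ℝ) ^ r := one_le_zpow₀ (by norm_num) hr
      nlinarith [norm_nonneg (b r), norm_nonneg (b r * (2:ℂ)⁻¹ ^ r)]
    · have : (1 : ℝ) ≤ (2 : ℝ)⁻¹ ^ r := by
        rw [inv_zpow, ← zpow_neg]
        exact one_le_zpow₀ (by norm_num) (by omega)
      nlinarith [norm_nonneg (b r), norm_nonneg (b r * (2:ℂ) ^ r)]
  have hnorm : Summable (fun r : ℤ => ‖b r‖) :=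
    Summable.of_nonneg_of_le (fun r => norm_nonneg _) hbnd (h2.add hh)
  have key : ∀ t : AddCircle (2 * π), ∑' r : ℤ, b r * fourier r t = 0 := by
    intro t
    induction t using QuotientAddGroup.induction_on with
    | H θ =>
      have hx : Complex.exp (θ * Complex.I) ≠ 0 := Complex.exp_ne_zero _
      have hf : ∀ r : ℤ, (fourier r (θ : AddCircle (2 * π)) : ℂ)
          = Complex.exp (θ * Complex.I) ^ r := by
        intro r
        rw [fourier_coe_apply, ← Complex.exp_int_mul]
        congr 1
        have hπ : (π : ℂ) ≠ 0 := Complex.ofReal_ne_zero.2 pi_ne_zero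
        push_cast
        field_simp
      simp_rw [hf]
      exact (hs _ hx).tsum_eq
  have hint : ∀ r : ℤ,
      ∫ t : AddCircle (2 * π), (fourier (-n) t : ℂ) * (b r * fourier r t) ∂haarAddCircle
        = if r = n then b n else 0 := by
    intro r
    have : ∀ t : AddCircle (2 * π), (fourier (-n) t : ℂ) * (b r * fourier r t)
        = b r * fourier (-n + r) t := by
      intro t; rw [fourier_add]; push_cast; ring
    simp_rw [this, integral_const_mul, integral_fourier']
    rcases eq_or_ne r n with h | h
    · subst h; simp
    · have : ¬(-n + r = 0) := by omega
      simp [h, this]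
  have hswap :
      ∑' r : ℤ, ∫ t : AddCircle (2 * π),
          (fourier (-n) t : ℂ) * (b r * fourier r t) ∂haarAddCircle
        = ∫ t : AddCircle (2 * π),
            ∑' r : ℤ, (fourier (-n) t : ℂ) * (b r * fourier r t) ∂haarAddCircle := by
    apply integral_tsum_of_summable_integral_norm
    · exact fun r => fourier_integrable' (2 * π) (-n) r (b r)
    · apply hnorm.congr
      intro r
      have : ∀ t : AddCircle (2 * π),
          ‖(fourier (-n) t : ℂ) * (b r * fourier r t)‖ = ‖b r‖ := by
        intro t
        simp [norm_mul, Circle.norm_coe]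
      simp_rw [this]
      simp
  have hzero : ∫ t : AddCircle (2 * π),
      ∑' r : ℤ, (fourier (-n) t : ℂ) * (b r * fourier r t) ∂haarAddCircle = 0 := by
    have : ∀ t : AddCircle (2 * π),
        ∑' r : ℤ, (fourier (-n) t : ℂ) * (b r * fourier r t) = 0 := by
      intro t
      rw [tsum_mul_left, key t, mul_zero]
    simp_rw [this, integral_zero]
  have : ∑' r : ℤ, (if r = n then b n else 0) = b n := tsum_ite_eq n (fun _ => b n)
  rw [← this]
  simp_rw [← hint]
  rw [hswap, hzero]

lemma half_fact' (r : ℤ) : -((r - 1) * (r - 1 - 1) / 2) - (r - 1) = -(r * (r - 1) / 2) := by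
  obtain ⟨k, hk⟩ : Even ((r - 1) * r) := by simpa using Int.even_mul_succ_self (r - 1)
  obtain ⟨j, hj⟩ : Even ((r - 2) * (r - 1)) := by
    have := Int.even_mul_succ_self (r - 2)
    rwa [show r - 2 + 1 = r - 1 by ring] at this
  have hk' : r * (r - 1) = 2 * k := by linear_combination hk
  have hj' : (r - 1) * (r - 1 - 1) = 2 * j := by linear_combination hj
  have e : 2 * k = 2 * j + 2 * (r - 1) := by linear_combination hj' - hk'
  rw [hk', hj', Int.mul_ediv_cancel_left _ (by norm_num), Int.mul_ediv_cancel_left _ (by norm_num)]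
  omega

theorem stmt18 (q : ℂ) (hq0 : 0 < ‖q‖) (hq1 : ‖q‖ < 1)
    (m : ℤ) (hm : 1 ≤ m) (a : ℤ → ℂ) (c : ℤ → ℂ)
    (hc : ∀ r : ℤ, c r = (-1 : ℂ) ^ r * q ^ (-(r * (r - 1) / 2) - r) * a r)
    (hatop : Filter.Tendsto a Filter.atTop (nhds 0))
    (habot : Filter.Tendsto a Filter.atBot (nhds 0))
    (hsum : ∀ x : ℂ, x ≠ 0 → Summable (fun r : ℤ => c r * x ^ r))
    (hfe : ∀ x : ℂ, x ≠ 0 →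
      (∑' r : ℤ, c r * (q * x) ^ r)
        = -x * (∑' r : ℤ, c r * x ^ r) + x ^ (1 - m) + x ^ m) :
    ∀ x : ℂ, x ≠ 0 →
      (∑' r : ℤ, c r * x ^ r)
        = (-1 : ℂ) ^ (m + 1) * q ^ (m * (m - 1) / 2)
            * ∑ r ∈ Finset.Icc (1 - m) (m - 1),
                (-1 : ℂ) ^ r * q ^ (-(r * (r - 1) / 2) - r) * x ^ r := by
  have hq : q ≠ 0 := by
    intro h; rw [h] at hq0; simp at hq0
  have hm1 : (-1 : ℂ) ≠ 0 := by norm_num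
  -- coefficient equation from functional equation
  have hb : ∀ r : ℤ, c r * q ^ r + c (r - 1) - (if r = 1 - m then 1 else 0)
      - (if r = m then (1:ℂ) else 0) = 0 := by
    apply laurent_coeff_zero (fun r : ℤ => c r * q ^ r + c (r - 1)
      - (if r = 1 - m then 1 else 0) - (if r = m then (1:ℂ) else 0))
    intro x hx
    have hqx : q * x ≠ 0 := mul_ne_zero hq hx
    have h1 : HasSum (fun r : ℤ => c r * q ^ r * x ^ r) (∑' r : ℤ, c r * (q * x) ^ r) := by
      have e : (fun r : ℤ => c r * (q * x) ^ r) = fun r : ℤ => c r * q ^ r * x ^ r := by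
        funext r; rw [mul_zpow, mul_assoc]
      rw [← e]
      exact (hsum (q * x) hqx).hasSum
    have h2 : HasSum (fun r : ℤ => c (r - 1) * x ^ r) (x * ∑' r : ℤ, c r * x ^ r) := by
      have h := ((hsum x hx).hasSum.mul_left x)
      have h' := ((Equiv.subRight (1 : ℤ)).hasSum_iff).2 h
      have e : ((fun r : ℤ => x * (c r * x ^ r)) ∘ (Equiv.subRight (1 : ℤ)))
          = fun r : ℤ => c (r - 1) * x ^ r := by
        funext r
        simp only [Function.comp_apply, Equiv.subRight_apply]
        rw [show x ^ r = x ^ (r - 1) * x from by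
          rw [← zpow_add_one₀ hx, sub_add_cancel]]
        ring
      rwa [e] at h'
    have h3 : HasSum (fun r : ℤ => (if r = 1 - m then (1:ℂ) else 0) * x ^ r) (x ^ (1 - m)) := by
      have h := hasSum_ite_eq (1 - m) (x ^ (1 - m) : ℂ)
      have e : (fun r : ℤ => if r = 1 - m then x ^ (1 - m) else 0)
          = fun r : ℤ => (if r = 1 - m then (1:ℂ) else 0) * x ^ r := by
        funext r
        split_ifs with h
        · subst h; rw [one_mul]
        · rw [zero_mul]
      rwa [e] at h
    have h4 : HasSum (fun r : ℤ => (if r = m then (1:ℂ) else 0) * x ^ r) (x ^ m) := by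
      have h := hasSum_ite_eq m (x ^ m : ℂ)
      have e : (fun r : ℤ => if r = m then x ^ m else 0)
          = fun r : ℤ => (if r = m then (1:ℂ) else 0) * x ^ r := by
        funext r
        split_ifs with h
        · subst h; rw [one_mul]
        · rw [zero_mul]
      rwa [e] at h
    have hv : (∑' r : ℤ, c r * (q * x) ^ r) + x * (∑' r : ℤ, c r * x ^ r)
        - x ^ (1 - m) - x ^ m = 0 := by
      rw [hfe x hx]; ring
    have hcomb := ((h1.add h2).sub h3).sub h4
    rw [hv] at hcomb
    have e : (fun r : ℤ => c r * q ^ r * x ^ r + c (r - 1) * x ^ r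
        - (if r = 1 - m then (1:ℂ) else 0) * x ^ r - (if r = m then (1:ℂ) else 0) * x ^ r)
        = fun r : ℤ => (c r * q ^ r + c (r - 1) - (if r = 1 - m then 1 else 0)
        - (if r = m then (1:ℂ) else 0)) * x ^ r := by
      funext r; ring
    rwa [e] at hcomb
  -- the recurrence for a
  have hstep : ∀ r : ℤ, a r = a (r - 1) + (-1 : ℂ) ^ r * q ^ (r * (r - 1) / 2) *
      ((if r = 1 - m then 1 else 0) + (if r = m then (1:ℂ) else 0)) := by
    intro r
    have hbr := hb r
    have h1 : c r * q ^ r = (-1 : ℂ) ^ r * q ^ (-(r * (r - 1) / 2)) * a r := by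
      calc c r * q ^ r = (-1 : ℂ) ^ r * (q ^ (-(r * (r - 1) / 2) - r) * q ^ r) * a r := by
            rw [hc r]; ring
      _ = (-1 : ℂ) ^ r * q ^ (-(r * (r - 1) / 2)) * a r := by
            rw [← zpow_add₀ hq, sub_add_cancel]
    have h2 : c (r - 1) = -((-1 : ℂ) ^ r * q ^ (-(r * (r - 1) / 2)) * a (r - 1)) := by
      rw [hc (r - 1)]
      have hsgn : (-1 : ℂ) ^ (r - 1) = -(-1 : ℂ) ^ r := by
        rw [zpow_sub_one₀ hm1]
        norm_num
      rw [hsgn, half_fact' r]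
      ring
    rw [h1, h2] at hbr
    have h3 : (-1 : ℂ) ^ r * q ^ (-(r * (r - 1) / 2)) * (a r - a (r - 1))
        = (if r = 1 - m then 1 else 0) + (if r = m then (1:ℂ) else 0) := by
      linear_combination hbr
    have hprod : ((-1 : ℂ) ^ r * q ^ (-(r * (r - 1) / 2)))
        * ((-1 : ℂ) ^ r * q ^ (r * (r - 1) / 2)) = 1 := by
      rw [mul_mul_mul_comm, ← zpow_add₀ hm1, ← zpow_add₀ hq]
      norm_num
      rw [← two_mul, zpow_mul]
      norm_num
    have hne : (-1 : ℂ) ^ r * q ^ (-(r * (r - 1) / 2)) ≠ 0 :=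
      mul_ne_zero (zpow_ne_zero _ hm1) (zpow_ne_zero _ hq)
    have goal' : a r - a (r - 1) = (-1 : ℂ) ^ r * q ^ (r * (r - 1) / 2) *
        ((if r = 1 - m then 1 else 0) + (if r = m then (1:ℂ) else 0)) := by
      apply mul_left_cancel₀ hne
      rw [show (-1 : ℂ) ^ r * q ^ (-(r * (r - 1) / 2)) * (a r - a (r - 1))
          = (-1 : ℂ) ^ r * q ^ (-(r * (r - 1) / 2)) * (a r - a (r - 1)) from rfl, h3]
      linear_combination (-((if r = 1 - m then (1:ℂ) else 0)
        + (if r = m then (1:ℂ) else 0))) * hprod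
    linear_combination goal'
  -- constancy away from the jumps
  have hconst : ∀ r : ℤ, r ≠ 1 - m → r ≠ m → a r = a (r - 1) := by
    intro r h1 h2
    rw [hstep r]
    simp [h1, h2]
  -- a vanishes for r ≥ m
  have htop' : ∀ r : ℤ, m ≤ r → a r = a m := by
    refine Int.le_induction rfl (fun n hn ih => ?_)
    rw [hconst (n + 1) (by omega) (by omega), show n + 1 - 1 = n by ring, ih]
  have ham : a m = 0 := by
    have h : Filter.Tendsto a Filter.atTop (nhds (a m)) := by
      apply Filter.Tendsto.congr' _ tendsto_const_nhds
      filter_upwards [Filter.eventually_ge_atTop m] with r hr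
      exact (htop' r hr).symm
    exact tendsto_nhds_unique h hatop
  have htop : ∀ r : ℤ, m ≤ r → a r = 0 := fun r hr => (htop' r hr).trans ham
  -- a vanishes for r ≤ -m
  have hbot' : ∀ r : ℤ, r ≤ -m → a r = a (-m) := by
    refine Int.le_induction_down rfl (fun n hn ih => ?_)
    rw [← hconst n (by omega) (by omega), ih]
  have hanm : a (-m) = 0 := by
    have h : Filter.Tendsto a Filter.atBot (nhds (a (-m))) := by
      apply Filter.Tendsto.congr' _ tendsto_const_nhds
      filter_upwards [Filter.eventually_le_atBot (-m)] with r hr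
      exact (hbot' r hr).symm
    exact tendsto_nhds_unique h habot
  have hbot : ∀ r : ℤ, r ≤ -m → a r = 0 := fun r hr => (hbot' r hr).trans hanm
  -- value on the middle range
  have hval : a (m - 1) = (-1 : ℂ) ^ (m + 1) * q ^ (m * (m - 1) / 2) := by
    have h := hstep m
    rw [htop m le_rfl] at h
    have h1m : ¬(m = 1 - m) := by omega
    rw [if_neg h1m, if_pos rfl] at h
    have : a (m - 1) = -((-1 : ℂ) ^ m * q ^ (m * (m - 1) / 2)) := by linear_combination -h
    rw [this, zpow_add_one₀ hm1]
    ring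
  have hmid' : ∀ r : ℤ, r ≤ m - 1 → 1 - m ≤ r → a r = a (m - 1) := by
    refine Int.le_induction_down (fun _ => rfl) (fun n hn ih h => ?_)
    rw [← hconst n (by omega) (by omega)]
    exact ih (by omega)
  have hmid : ∀ r : ℤ, 1 - m ≤ r → r ≤ m - 1 →
      a r = (-1 : ℂ) ^ (m + 1) * q ^ (m * (m - 1) / 2) := by
    intro r h1 h2
    rw [hmid' r h2 h1, hval]
  -- final computation
  intro x hx
  have hczero : ∀ r : ℤ, r ∉ Finset.Icc (1 - m) (m - 1) → c r * x ^ r = 0 := by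
    intro r hr
    rw [Finset.mem_Icc] at hr
    have : a r = 0 := by
      rcases le_or_gt r (-m) with h | h
      · exact hbot r h
      · exact htop r (by omega)
    rw [hc r, this, mul_zero, zero_mul]
  rw [tsum_eq_sum hczero, Finset.mul_sum]
  apply Finset.sum_congr rfl
  intro r hr
  rw [Finset.mem_Icc] at hr
  rw [hc r, hmid r hr.1 hr.2]
  ring
end
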